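/- Let i₁ : ℤ → G be a group homomorphism into an abelian group G with kernel aℤ for some integer a ≥ 2, and suppose G is generated by im(i₁) together with the image of another homomorphism i₂ : ℤ → G, and G/im(i₁) ≅ ℤ. Then G ≅ ℤ ⊕ ℤ/aℤ and the kernel of k = i₁ ⊕ i₂ : ℤ ⊕ ℤ → G is infinite cyclic. -/
import Mathlib


/-- Let `i₁ : ℤ → G` be a homomorphism into an abelian group `G` with kernel
`aℤ` for some `a ≥ 2`, suppose `G` is generated by `im(i₁)` together with the image of another
homomorphism `i₂ : ℤ → G`, and `G/im(i₁) ≅ ℤ`.  Then `G ≅ ℤ ⊕ ℤ/aℤ` and the kernel of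
`k = i₁ ⊕ i₂ : ℤ ⊕ ℤ → G` is infinite cyclic. -/
theorem stmt5 {G : Type*} [AddCommGroup G] (i₁ i₂ : ℤ →+ G) (a : ℕ) (ha : 2 ≤ a)
    (hker : i₁.ker = AddSubgroup.zmultiples (a : ℤ))
    (hgen : i₁.range ⊔ i₂.range = (⊤ : AddSubgroup G))
    (hquot : Nonempty ((G ⧸ i₁.range) ≃+ ℤ)) :
    Nonempty (G ≃+ ℤ × ZMod a) ∧ Nonempty ((i₁.coprod i₂).ker ≃+ ℤ) := by
  obtain ⟨e⟩ := hquot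
  have ha0 : (a : ℤ) ≠ 0 := by positivity
  set q : G →+ ℤ := e.toAddMonoidHom.comp (QuotientAddGroup.mk' i₁.range) with hq
  have hqker : ∀ x : G, q x = 0 ↔ x ∈ i₁.range := by
    intro x
    rw [hq]
    simp only [AddMonoidHom.comp_apply, AddEquiv.coe_toAddMonoidHom,
      QuotientAddGroup.mk'_apply]
    rw [AddEquivClass.map_eq_zero_iff, QuotientAddGroup.eq_zero_iff]
  have hqsurj : Function.Surjective q := by
    intro n
    obtain ⟨x, hx⟩ := QuotientAddGroup.mk'_surjective i₁.range (e.symm n)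
    refine ⟨x, ?_⟩
    rw [hq]
    simp only [AddMonoidHom.comp_apply, AddEquiv.coe_toAddMonoidHom]
    rw [hx, AddEquiv.apply_symm_apply]
  obtain ⟨g, hg⟩ := hqsurj 1
  have memker : ∀ x : G, x - q x • g ∈ i₁.range := by
    intro x
    rw [← hqker]
    simp [hg]
  -- the splitting equivalence
  have hrange : ∀ x : G, x ∈ i₁.range → q x = 0 := fun x hx => (hqker x).2 hx
  let φ : G ≃+ ℤ × i₁.range :=
  { toFun := fun x => (q x, ⟨x - q x • g, memker x⟩)
    invFun := fun p => p.1 • g + p.2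
    left_inv := fun x => by simp
    right_inv := fun p => by
      have h2 : q (p.2 : G) = 0 := hrange _ p.2.2
      have h1 : q (p.1 • g + p.2) = p.1 := by simp [hg, h2]
      ext
      · exact h1
      · simp [h1]
    map_add' := fun x y => by
      ext
      · simp
      · simp only [map_add, AddSubgroup.coe_add, Prod.snd_add]
        rw [add_smul]
        abel }
  -- i₁.range ≃+ ZMod a
  have e2 : i₁.range ≃+ ZMod a :=
    ((QuotientAddGroup.quotientKerEquivRange i₁).symm.trans
      (QuotientAddGroup.quotientAddEquivOfEq hker)).trans
      (Int.quotientZMultiplesNatEquivZMod a)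
  refine ⟨⟨φ.trans ((AddEquiv.refl ℤ).prodCongr e2)⟩, ?_⟩
  -- second part
  set c : ℤ := q (i₂ 1) with hc
  have hqi₂ : ∀ n : ℤ, q (i₂ n) = n * c := by
    intro n
    have : i₂ n = n • i₂ 1 := by simp [← map_zsmul]
    rw [this, map_zsmul, smul_eq_mul, hc]
  have hcne : c ≠ 0 := by
    have : (g : G) ∈ i₁.range ⊔ i₂.range := hgen ▸ AddSubgroup.mem_top g
    obtain ⟨x, hx, y, hy, hxy⟩ := AddSubgroup.mem_sup.1 this
    obtain ⟨n, rfl⟩ := hy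
    have : q x + q (i₂ n) = 1 := by rw [← map_add, hxy, hg]
    rw [hrange x hx, zero_add, hqi₂] at this
    intro h
    rw [h, mul_zero] at this
    exact one_ne_zero this.symm
  have haker : (a : ℤ) ∈ i₁.ker := by
    rw [hker]
    exact AddSubgroup.mem_zmultiples _
  let ψ : ℤ →+ (i₁.coprod i₂).ker :=
  { toFun := fun t => ⟨(t * a, 0), by
      have : i₁ (t * a) = 0 := by
        have : (t * (a:ℤ)) ∈ i₁.ker := by
          have := AddSubgroup.zsmul_mem i₁.ker haker t
          simpa using this
        exact this
      simp [AddMonoidHom.mem_ker, this]⟩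
    map_zero' := by ext <;> simp
    map_add' := fun s t => by ext <;> simp [add_mul] }
  have hbij : Function.Bijective ψ := by
    constructor
    · intro s t hst
      have : s * a = t * a := congrArg (fun z => (z : (ℤ × ℤ)).1) (congrArg Subtype.val hst)
      exact mul_right_cancel₀ ha0 this
    · rintro ⟨⟨m, n⟩, h⟩
      have h' : i₁ m + i₂ n = 0 := h
      have hq0 : q (i₁ m + i₂ n) = 0 := by rw [h', map_zero]
      rw [map_add, hrange _ ⟨m, rfl⟩, zero_add, hqi₂] at hq0
      have hn : n = 0 := by
        rcases mul_eq_zero.1 hq0 with h | h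
        · exact h
        · exact absurd h hcne
      have hm : i₁ m = 0 := by
        rw [hn, map_zero, add_zero] at h'
        exact h'
      have : m ∈ AddSubgroup.zmultiples (a : ℤ) := hker ▸ hm
      obtain ⟨t, ht⟩ := AddSubgroup.mem_zmultiples_iff.1 this
      refine ⟨t, ?_⟩
      apply Subtype.ext
      have : t * a = m := by simpa [mul_comm] using ht
      simp [ψ, this, hn]
  exact ⟨(AddEquiv.ofBijective ψ hbij).symm⟩
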